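/- If κ is a weakly compact cardinal, then every almost-free abelian group of size κ is free: if G is an abelian group of cardinality κ such that every subgroup of cardinality less than κ is a free abelian group, then G itself is free. -/

import Mathlib

universe u

/-- A cardinal `κ` is weakly compact if it is (strongly) inaccessible and satisfies the
partition property `κ → (κ)²₂`: every 2-coloring of pairs of ordinals below `κ` has a
homogeneous set of size `κ`. -/
def IsWeaklyCompact (κ : Cardinal.{u}) : Prop :=
  κ.IsInaccessible ∧
  ∀ c : κ.ord.ToType → κ.ord.ToType → Bool,
    ∃ H : Set κ.ord.ToType, Cardinal.mk ↥H = κ ∧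
      ∀ x ∈ H, ∀ y ∈ H, x < y → ∀ x' ∈ H, ∀ y' ∈ H, x' < y' → c x y = c x' y'

namespace WCproof

open Cardinal Set

variable {κ : Cardinal.{u}}


/-- Abbreviation for the canonical type of order type `κ.ord`. -/
abbrev OT (κ : Cardinal.{u}) : Type u := κ.ord.ToType

theorem mk_OT : #(OT κ) = κ := by
  rw [Cardinal.mk_toType, Cardinal.card_ord]

theorem mk_Iio_lt (x : OT κ) : #(Iio x) < κ := Cardinal.mk_Iio_ord_toType x

theorem mk_Iic_lt (hκ : ℵ₀ ≤ κ) (x : OT κ) : #(Iic x) < κ := by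
  have h : (Iic x : Set (OT κ)) ⊆ Iio x ∪ {x} := by
    intro y hy
    rcases lt_or_eq_of_le (Set.mem_Iic.mp hy) with h | h
    · exact Or.inl h
    · exact Or.inr (by simp [h])
  calc #(Iic x) ≤ #↥(Iio x ∪ {x} : Set (OT κ)) := mk_le_mk_of_subset h
    _ ≤ #(Iio x) + #({x} : Set (OT κ)) := mk_union_le _ _
    _ < κ := by
      apply Cardinal.add_lt_of_lt hκ (mk_Iio_lt x)
      simp only [mk_fintype, Fintype.card_ofSubsingleton, Nat.cast_one]
      exact lt_of_lt_of_le Cardinal.one_lt_aleph0 hκ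

theorem exists_gt (hκ : ℵ₀ ≤ κ) (x : OT κ) : ∃ y : OT κ, x < y := by
  by_contra h
  push_neg at h
  have huniv : (univ : Set (OT κ)) = Iic x := by
    ext y; simpa using h y
  have h2 : #(OT κ) < κ := by
    calc #(OT κ) = #(univ : Set (OT κ)) := (mk_univ (α := OT κ)).symm
      _ = #(Iic x) := by rw [huniv]
      _ < κ := mk_Iic_lt hκ x
  rw [mk_OT] at h2; exact lt_irrefl _ h2

noncomputable def succO (hκ : ℵ₀ ≤ κ) (x : OT κ) : OT κ :=
  (wellFounded_lt).min {y : OT κ | x < y} (exists_gt hκ x)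

theorem lt_succO (hκ : ℵ₀ ≤ κ) (x : OT κ) : x < succO hκ x :=
  (wellFounded_lt).min_mem _ (exists_gt hκ x)

theorem succO_le (hκ : ℵ₀ ≤ κ) {x y : OT κ} (h : x < y) : succO hκ x ≤ y := by
  by_contra hc
  push_neg at hc
  exact (wellFounded_lt).not_lt_min {y : OT κ | x < y} h hc

/-- Any subset of `OT κ` of size `< κ` is bounded above (strictly). -/
theorem bounded_of_small (hreg : κ.IsRegular) {S : Set (OT κ)} (hS : #S < κ) :
    ∃ ζ : OT κ, ∀ s ∈ S, s < ζ := by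
  have hκ : ℵ₀ ≤ κ := hreg.aleph0_le
  by_contra h
  push_neg at h
  have hcover : (univ : Set (OT κ)) = ⋃ s : S, Iic (s : OT κ) := by
    ext ζ
    simp only [mem_univ, true_iff, mem_iUnion]
    obtain ⟨s, hs, hle⟩ := h ζ
    exact ⟨⟨s, hs⟩, hle⟩
  have hle2 : #(OT κ) ≤ #S * ⨆ s : S, #(Iic (s : OT κ)) := by
    calc #(OT κ) = #(univ : Set (OT κ)) := (mk_univ (α := OT κ)).symm
      _ = #(⋃ s : S, Iic (s : OT κ)) := by rw [hcover]
      _ ≤ #S * ⨆ s : S, #(Iic (s : OT κ)) := mk_iUnion_le _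
  have hlt : #S * ⨆ s : S, #(Iic (s : OT κ)) < κ := by
    apply Cardinal.mul_lt_of_lt hκ hS
    exact Cardinal.iSup_lt_of_isRegular hreg hS fun s => mk_Iic_lt hκ _
  rw [mk_OT] at hle2
  exact absurd (lt_of_le_of_lt hle2 hlt) (lt_irrefl κ)

/-- Any subset of size `κ` is unbounded. -/
theorem unbounded_of_big (hreg : κ.IsRegular) {S : Set (OT κ)} (hS : κ ≤ #S) (x : OT κ) :
    ∃ y ∈ S, x < y := by
  by_contra h
  push_neg at h
  have hsub : S ⊆ Iic x := fun y hy => h y hy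
  exact absurd (lt_of_le_of_lt (hS.trans (mk_le_mk_of_subset hsub))
    (mk_Iic_lt hreg.aleph0_le x)) (lt_irrefl κ)

/-- Fiber lemma: a map from a κ-sized type into a small type has a κ-sized fiber. -/
theorem exists_big_fiber (hreg : κ.IsRegular) {X : Type u} (hX : κ ≤ #X)
    {β : Type u} (hβ : #β < κ) (q : X → β) : ∃ b : β, κ ≤ #{x : X | q x = b} := by
  by_contra h
  push_neg at h
  have hcover : (univ : Set X) = ⋃ b : β, {x : X | q x = b} := by
    ext x; simp
  have hle : #X ≤ #β * ⨆ b : β, #{x : X | q x = b} := by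
    calc #X = #(univ : Set X) := (mk_univ (α := X)).symm
      _ = #(⋃ b : β, {x : X | q x = b}) := by rw [hcover]
      _ ≤ #β * ⨆ b : β, #{x : X | q x = b} := mk_iUnion_le _
  have hlt : #β * ⨆ b : β, #{x : X | q x = b} < κ := by
    apply Cardinal.mul_lt_of_lt hreg.aleph0_le hβ
    exact Cardinal.iSup_lt_of_isRegular hreg hβ fun b => h b
  exact absurd (lt_of_le_of_lt (hX.trans hle) hlt) (lt_irrefl κ)

theorem mk_patterns_lt (hκ : κ.IsInaccessible) (ξ : OT κ) :
    #(Iio ξ → Bool) < κ := by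
  have h1 : #(Iio ξ → Bool) ≤ 2 ^ #(Iio ξ) := by
    rw [← Cardinal.mk_set]
    refine Cardinal.mk_le_of_injective (f := fun f => {y | f y = true}) ?_
    intro f g hfg
    funext y
    have h3 : (f y = true) ↔ (g y = true) := by
      have := congrArg (fun s => y ∈ s) hfg
      simpa [Set.mem_setOf_eq] using this
    cases hf : f y <;> cases hg : g y <;> simp_all
  exact lt_of_le_of_lt h1 (hκ.isStrongPrelimit (mk_Iio_lt ξ))



section Branch

/-- Lexicographic strict comparison of boolean patterns. -/
def lexlt (p q : OT κ → Bool) : Prop :=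
  ∃ i, (∀ j < i, p j = q j) ∧ p i = false ∧ q i = true

def lexle (p q : OT κ → Bool) : Prop := p = q ∨ lexlt p q

theorem lexlt_total {p q : OT κ → Bool} (h : p ≠ q) : lexlt p q ∨ lexlt q p := by
  have hne : {i : OT κ | p i ≠ q i}.Nonempty := by
    rcases Function.ne_iff.mp h with ⟨i, hi⟩
    exact ⟨i, hi⟩
  set i₀ := (wellFounded_lt (α := OT κ)).min _ hne with hi₀
  have hmem : p i₀ ≠ q i₀ := (wellFounded_lt).min_mem _ hne
  have hbelow : ∀ j < i₀, p j = q j := by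
    intro j hj
    by_contra hc
    exact (wellFounded_lt).not_lt_min {i : OT κ | p i ≠ q i} hc hj
  rcases hp : p i₀ <;> rcases hq : q i₀
  · exact absurd (hp.trans hq.symm) hmem
  · exact Or.inl ⟨i₀, hbelow, hp, hq⟩
  · exact Or.inr ⟨i₀, fun j hj => (hbelow j hj).symm, hq, hp⟩
  · exact absurd (hp.trans hq.symm) hmem

/-- If `lexlt p q` and `p, q` agree strictly below `i₀` and differ at `i₀`, then the
lex witness is `i₀`. -/
theorem lexlt_witness {p q : OT κ → Bool} (h : lexlt p q) {i₀ : OT κ}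
    (hag : ∀ j < i₀, p j = q j) (hne : p i₀ ≠ q i₀) : p i₀ = false ∧ q i₀ = true := by
  obtain ⟨i₁, hag₁, hp₁, hq₁⟩ := h
  rcases lt_trichotomy i₁ i₀ with hlt | heq | hgt
  · exact absurd (hag i₁ hlt) (by rw [hp₁, hq₁]; simp)
  · rw [← heq]; exact ⟨hp₁, hq₁⟩
  · exact absurd (hag₁ i₀ hgt) hne

/-- The key branch lemma: given κ-many sets, there is a boolean "branch" `h` all of whose
finite-level agreement sets have size `κ`. -/
theorem branch_lemma (hκI : κ.IsInaccessible)
    (hpart : ∀ c : OT κ → OT κ → Bool, ∃ H : Set (OT κ), #H = κ ∧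
      ∀ x ∈ H, ∀ y ∈ H, x < y → ∀ x' ∈ H, ∀ y' ∈ H, x' < y' → c x y = c x' y')
    (A : OT κ → Set (OT κ)) :
    ∃ h : OT κ → Bool, ∀ ξ : OT κ,
      κ ≤ #{α : OT κ | ∀ i < ξ, (α ∈ A i ↔ h i = true)} := by
  classical
  have hreg : κ.IsRegular := hκI.isRegular
  have hκ0 : ℵ₀ ≤ κ := hreg.aleph0_le
  -- choose representatives with big agreement classes
  have key : ∀ ξ : OT κ, ∃ α : OT κ,
      κ ≤ #{a : OT κ | ∀ i < ξ, (a ∈ A i ↔ α ∈ A i)} := by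
    intro ξ
    obtain ⟨b, hb⟩ := exists_big_fiber hreg (X := OT κ) (le_of_eq mk_OT.symm)
      (mk_patterns_lt hκI ξ) (fun α => fun i : Iio ξ => decide (α ∈ A i.val))
    have hne : {x : OT κ | (fun i : Iio ξ => decide (x ∈ A i.val)) = b}.Nonempty := by
      rcases Cardinal.mk_ne_zero_iff.1 (ne_of_gt (lt_of_lt_of_le hκI.isRegular.pos hb)) with ⟨x⟩
      exact ⟨x.1, x.2⟩
    obtain ⟨α, hα⟩ := hne
    refine ⟨α, le_trans hb (mk_le_mk_of_subset ?_)⟩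
    intro a ha i hi
    have h1 : decide (a ∈ A i) = decide (α ∈ A i) := by
      have e1 := congrFun (ha : _) ⟨i, hi⟩
      have e2 := congrFun (hα : _) ⟨i, hi⟩
      simp only at e1 e2
      rw [e1, e2]
    constructor <;> intro hmem
    · exact of_decide_eq_true (by rw [← h1]; exact decide_eq_true hmem)
    · exact of_decide_eq_true (by rw [h1]; exact decide_eq_true hmem)
  choose uu hu using key
  set pt : OT κ → OT κ → Bool := fun δ i => decide (uu δ ∈ A i) with hpt
  -- the coloring
  obtain ⟨H, hHk, hhom⟩ := hpart (fun δ δ' => decide (lexle (pt δ) (pt δ')))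
  -- homogeneous value
  have hHne : H.Nonempty := by
    rcases Cardinal.mk_ne_zero_iff.1 (by rw [hHk]; exact ne_of_gt hreg.pos) with ⟨x⟩
    exact ⟨x.1, x.2⟩
  obtain ⟨x₀, hx₀⟩ := hHne
  obtain ⟨y₀, hy₀, hxy₀⟩ := unbounded_of_big hreg (le_of_eq hHk.symm) x₀
  set v : Bool := decide (lexle (pt x₀) (pt y₀)) with hv
  have homog : ∀ x ∈ H, ∀ y ∈ H, x < y → decide (lexle (pt x) (pt y)) = v :=
    fun x hx y hy hxy => hhom x hx y hy hxy x₀ hx₀ y₀ hy₀ hxy₀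
  -- convexity
  have convex : ∀ δ₁ ∈ H, ∀ δ₂ ∈ H, ∀ δ₃ ∈ H, δ₁ < δ₂ → δ₂ < δ₃ →
      ∀ ξ : OT κ, (∀ i < ξ, pt δ₁ i = pt δ₃ i) → ∀ i < ξ, pt δ₁ i = pt δ₂ i := by
    intro δ₁ h₁ δ₂ h₂ δ₃ h₃ h12 h23 ξ hag
    by_contra hc
    push_neg at hc
    have hne : {i : OT κ | i < ξ ∧ pt δ₁ i ≠ pt δ₂ i}.Nonempty := by
      obtain ⟨i, hi, hne⟩ := hc; exact ⟨i, hi, hne⟩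
    set i₀ := (wellFounded_lt (α := OT κ)).min _ hne with hi₀def
    obtain ⟨hi₀ξ, hi₀ne⟩ : i₀ < ξ ∧ pt δ₁ i₀ ≠ pt δ₂ i₀ := (wellFounded_lt).min_mem _ hne
    have hbelow : ∀ j < i₀, pt δ₁ j = pt δ₂ j := by
      intro j hj
      by_contra hcj
      exact (wellFounded_lt).not_lt_min {i : OT κ | i < ξ ∧ pt δ₁ i ≠ pt δ₂ i}
        ⟨lt_trans hj hi₀ξ, hcj⟩ hj
    have e12 := homog δ₁ h₁ δ₂ h₂ h12
    have e23 := homog δ₂ h₂ δ₃ h₃ h23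
    have h13 : pt δ₁ i₀ = pt δ₃ i₀ := hag i₀ hi₀ξ
    have h23ne : pt δ₂ i₀ ≠ pt δ₃ i₀ := by rw [← h13]; exact fun hg => hi₀ne hg.symm
    have hbelow23 : ∀ j < i₀, pt δ₂ j = pt δ₃ j := by
      intro j hj
      rw [← hbelow j hj]
      exact hag j (lt_trans hj hi₀ξ)
    rcases hvv : v with _ | _
    · -- v = false: both pairs strictly decreasing
      rw [hvv] at e12 e23
      have hlt21 : lexlt (pt δ₂) (pt δ₁) := by
        have hne12 : pt δ₁ ≠ pt δ₂ := fun hg => hi₀ne (congrFun hg i₀)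
        have : ¬ lexle (pt δ₁) (pt δ₂) := of_decide_eq_false e12
        rcases lexlt_total hne12 with hl | hl
        · exact absurd (Or.inr hl) this
        · exact hl
      have hlt32 : lexlt (pt δ₃) (pt δ₂) := by
        have hne23 : pt δ₂ ≠ pt δ₃ := fun hg => h23ne (congrFun hg i₀)
        have : ¬ lexle (pt δ₂) (pt δ₃) := of_decide_eq_false e23
        rcases lexlt_total hne23 with hl | hl
        · exact absurd (Or.inr hl) this
        · exact hl
      obtain ⟨hp21, hq21⟩ := lexlt_witness hlt21 (fun j hj => (hbelow j hj).symm)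
        (fun hg => hi₀ne hg.symm)
      obtain ⟨hp32, hq32⟩ := lexlt_witness hlt32 (fun j hj => (hbelow23 j hj).symm)
        (fun hg => h23ne hg.symm)
      -- pt δ₃ i₀ = false but pt δ₃ i₀ = pt δ₁ i₀ = true
      rw [← h13, hq21] at hp32
      exact absurd hp32 (by simp)
    · -- v = true: both pairs increasing
      rw [hvv] at e12 e23
      have hle12 : lexle (pt δ₁) (pt δ₂) := of_decide_eq_true e12
      have hle23 : lexle (pt δ₂) (pt δ₃) := of_decide_eq_true e23
      have hlt12 : lexlt (pt δ₁) (pt δ₂) := by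
        rcases hle12 with he | hl
        · exact absurd (congrFun he i₀) hi₀ne
        · exact hl
      have hlt23 : lexlt (pt δ₂) (pt δ₃) := by
        rcases hle23 with he | hl
        · exact absurd (congrFun he i₀) h23ne
        · exact hl
      obtain ⟨hp12, hq12⟩ := lexlt_witness hlt12 hbelow hi₀ne
      obtain ⟨hp23, hq23⟩ := lexlt_witness hlt23 hbelow23 h23ne
      rw [hq12] at hp23
      exact absurd hp23 (by simp)
  -- stabilization
  have stabex : ∀ ξ : OT κ, ∃ δ₀ : OT κ, δ₀ ∈ H ∧ ξ < δ₀ ∧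
      ∀ δ ∈ H, δ₀ ≤ δ → ∀ i < ξ, pt δ i = pt δ₀ i := by
    intro ξ
    set H' : Set (OT κ) := {δ ∈ H | ξ < δ} with hH'
    have hH'k : κ ≤ #H' := by
      by_contra hc
      push_neg at hc
      have hsub : H ⊆ H' ∪ (H ∩ Iic ξ) := by
        intro δ hδ
        rcases le_or_gt δ ξ with h | h
        · exact Or.inr ⟨hδ, h⟩
        · exact Or.inl ⟨hδ, h⟩
      have : κ ≤ #H' + #↥(H ∩ Iic ξ) :=
        le_trans (le_of_eq hHk.symm) (le_trans (mk_le_mk_of_subset hsub) (mk_union_le _ _))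
      have hlt : #H' + #↥(H ∩ Iic ξ) < κ :=
        Cardinal.add_lt_of_lt hκ0 hc
          (lt_of_le_of_lt (mk_le_mk_of_subset Set.inter_subset_right) (mk_Iic_lt hκ0 ξ))
      exact absurd (lt_of_le_of_lt this hlt) (lt_irrefl κ)
    obtain ⟨b, hb⟩ := exists_big_fiber hreg (X := ↥H') hH'k (mk_patterns_lt hκI ξ)
      (fun δ => fun i : Iio ξ => pt δ.val i.val)
    set Fib : Set (OT κ) := Subtype.val '' {x : ↥H' | (fun i : Iio ξ => pt x.val i.val) = b}
      with hFib
    have hFibk : κ ≤ #Fib := by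
      rw [hFib]
      rwa [Cardinal.mk_image_eq Subtype.val_injective]
    have hFibne : Fib.Nonempty := by
      rcases Cardinal.mk_ne_zero_iff.1 (ne_of_gt (lt_of_lt_of_le hreg.pos hFibk)) with ⟨x⟩
      exact ⟨x.1, x.2⟩
    obtain ⟨δ₀, hδ₀⟩ := hFibne
    have hδ₀H' : δ₀ ∈ H' := by
      obtain ⟨x, _, hx⟩ := hδ₀; rw [← hx]; exact x.2
    have hagrFib : ∀ δ ∈ Fib, ∀ i < ξ, pt δ i = pt δ₀ i := by
      intro δ hδ i hi
      obtain ⟨x, hx, hxe⟩ := hδ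
      obtain ⟨x₀', hx₀', hxe₀⟩ := hδ₀
      have e1 := congrFun (hx : _) ⟨i, hi⟩
      have e2 := congrFun (hx₀' : _) ⟨i, hi⟩
      simp only at e1 e2
      rw [← hxe, ← hxe₀, e1, e2]
    refine ⟨δ₀, hδ₀H'.1, hδ₀H'.2, ?_⟩
    intro δ hδ hle i hi
    rcases eq_or_lt_of_le hle with he | hlt
    · rw [← he]
    · obtain ⟨δ₃, hδ₃F, hδ₃gt⟩ := unbounded_of_big hreg hFibk δ
      have hδ₃H' : δ₃ ∈ H' := by
        obtain ⟨x, _, hx⟩ := hδ₃F; rw [← hx]; exact x.2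
      have hag13 : ∀ j < ξ, pt δ₀ j = pt δ₃ j :=
        fun j hj => (hagrFib δ₃ hδ₃F j hj).symm
      exact (convex δ₀ hδ₀H'.1 δ hδ δ₃ hδ₃H'.1 hlt hδ₃gt ξ hag13 i hi).symm
  choose stab hstabH hstabgt hstab using stabex
  refine ⟨fun i => pt (stab (succO hκ0 i)) i, ?_⟩
  intro ξ
  have hcoh : ∀ i, i < ξ → pt (stab ξ) i = pt (stab (succO hκ0 i)) i := by
    intro i hi
    obtain ⟨δ, hδH, hδgt⟩ := unbounded_of_big hreg (le_of_eq hHk.symm)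
      (max (stab ξ) (stab (succO hκ0 i)))
    have h1 : pt δ i = pt (stab ξ) i :=
      hstab ξ δ hδH (le_of_lt (lt_of_le_of_lt (le_max_left _ _) hδgt)) i hi
    have h2 : pt δ i = pt (stab (succO hκ0 i)) i :=
      hstab (succO hκ0 i) δ hδH (le_of_lt (lt_of_le_of_lt (le_max_right _ _) hδgt)) i
        (lt_succO hκ0 i)
    rw [← h1, h2]
  refine le_trans (hu (stab ξ)) (mk_le_mk_of_subset ?_)
  intro a ha i hi
  have hiδ : i < stab ξ := lt_trans hi (hstabgt ξ)
  have h1 : (a ∈ A i) ↔ (uu (stab ξ) ∈ A i) := ha i hiδ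
  have h2 : (uu (stab ξ) ∈ A i) ↔ (pt (stab ξ) i = true) := by
    rw [hpt]; simp
  rw [h1, h2, hcoh i hi]

end Branch

section Lam

noncomputable def ordOf (x : OT κ) : Ordinal.{u} :=
  ((Ordinal.ToType.mk (o := κ.ord)).symm x).val

theorem ordOf_lt_ord (x : OT κ) : ordOf x < κ.ord :=
  ((Ordinal.ToType.mk (o := κ.ord)).symm x).prop

noncomputable def elOf (o : Ordinal.{u}) (h : o < κ.ord) : OT κ :=
  Ordinal.ToType.mk (o := κ.ord) ⟨o, h⟩

@[simp] theorem ordOf_elOf (o : Ordinal.{u}) (h : o < κ.ord) : ordOf (elOf o h) = o := by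
  unfold ordOf elOf
  rw [OrderIso.symm_apply_apply]

theorem ordOf_lt_iff {x y : OT κ} : ordOf x < ordOf y ↔ x < y := by
  unfold ordOf
  rw [Subtype.coe_lt_coe, OrderIso.lt_iff_lt]

theorem ordOf_le_iff {x y : OT κ} : ordOf x ≤ ordOf y ↔ x ≤ y := by
  constructor <;> intro h
  · by_contra hc
    push_neg at hc
    exact absurd (lt_of_le_of_lt h (ordOf_lt_iff.2 hc)) (lt_irrefl _)
  · rcases eq_or_lt_of_le h with he | hl
    · rw [he]
    · exact le_of_lt (ordOf_lt_iff.2 hl)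

theorem omega0_lt_ord (hκ : ℵ₀ < κ) : (Ordinal.omega0 : Ordinal.{u}) < κ.ord := by
  rw [Cardinal.lt_ord, Ordinal.card_omega0]; exact hκ

/-- Largest-limit-ordinal-below function. -/
noncomputable def limO (o : Ordinal.{u}) : Ordinal.{u} :=
  Ordinal.omega0 * (max o Ordinal.omega0 / Ordinal.omega0)

theorem limO_isLimit (o : Ordinal.{u}) : Order.IsSuccLimit (limO o) := by
  apply Ordinal.isSuccLimit_mul_left Ordinal.isSuccLimit_omega0
  rw [Ordinal.div_pos Ordinal.omega0_ne_zero]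
  exact le_max_right _ _

theorem limO_le_max (o : Ordinal.{u}) : limO o ≤ max o Ordinal.omega0 :=
  Ordinal.mul_div_le _ _

theorem max_lt_limO_add (o : Ordinal.{u}) :
    max o Ordinal.omega0 < limO o + Ordinal.omega0 := by
  conv_lhs => rw [← Ordinal.div_add_mod (max o Ordinal.omega0) Ordinal.omega0]
  exact (add_lt_add_iff_left _).2 (Ordinal.mod_lt _ Ordinal.omega0_ne_zero)

theorem limit_le_limO {m o : Ordinal.{u}} (hm : Order.IsSuccLimit m) (h : m ≤ o) : m ≤ limO o := by
  by_contra hc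
  push_neg at hc
  have h1 : m ≤ max o Ordinal.omega0 := le_trans h (le_max_left _ _)
  have h2 : m < limO o + Ordinal.omega0 := lt_of_le_of_lt h1 (max_lt_limO_add o)
  have h3 : limO o + (m - limO o) = m := Ordinal.add_sub_cancel_of_le (le_of_lt hc)
  have h4 : m - limO o < Ordinal.omega0 := by
    have := h2
    rw [← h3] at this
    exact (add_lt_add_iff_left _).1 this
  obtain ⟨n, hn⟩ := Ordinal.lt_omega0.1 h4
  have h5 : n ≠ 0 := by
    rintro rfl
    simp only [Nat.cast_zero] at hn
    rw [hn, add_zero] at h3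
    exact absurd h3 (ne_of_lt hc)
  obtain ⟨k, rfl⟩ := Nat.exists_eq_succ_of_ne_zero h5
  have h6 : m = (limO o + k) + 1 := by
    rw [← h3, hn]
    push_cast
    rw [add_assoc]
  have h7 : limO o + k < m := by
    rw [h6]; exact lt_of_lt_of_le (lt_add_one _) (le_refl _)
  have h8 := hm.succ_lt h7
  rw [h6] at h8
  rw [Order.succ_eq_add_one] at h8
  exact absurd h8 (lt_irrefl _)

theorem limO_lt_ord (hκ : ℵ₀ < κ) {o : Ordinal.{u}} (ho : o < κ.ord) : limO o < κ.ord :=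
  lt_of_le_of_lt (limO_le_max o) (max_lt ho (omega0_lt_ord hκ))

/-- The λ-rounding function on `OT κ`: largest limit ordinal `≤ x` (or `ω`). -/
noncomputable def lamO (hκ : ℵ₀ < κ) (x : OT κ) : OT κ :=
  elOf (limO (ordOf x)) (limO_lt_ord hκ (ordOf_lt_ord x))

theorem lamO_isLimit (hκ : ℵ₀ < κ) (x : OT κ) : Order.IsSuccLimit (ordOf (lamO hκ x)) := by
  unfold lamO; rw [ordOf_elOf]; exact limO_isLimit _

/-- Notation for "x is a limit point". -/
def IsLimO (x : OT κ) : Prop := Order.IsSuccLimit (ordOf x)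

theorem lamO_isLimO (hκ : ℵ₀ < κ) (x : OT κ) : IsLimO (lamO hκ x) := lamO_isLimit hκ x

noncomputable def omO (hκ : ℵ₀ < κ) : OT κ := elOf Ordinal.omega0 (omega0_lt_ord hκ)

theorem lamO_le (hκ : ℵ₀ < κ) {x : OT κ} (hx : omO hκ ≤ x) : lamO hκ x ≤ x := by
  rw [← ordOf_le_iff]
  unfold lamO
  rw [ordOf_elOf]
  have : Ordinal.omega0 ≤ ordOf x := by
    have := ordOf_le_iff.2 hx
    unfold omO at this
    rwa [ordOf_elOf] at this
  calc limO (ordOf x) ≤ max (ordOf x) Ordinal.omega0 := limO_le_max _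
    _ = ordOf x := max_eq_left this

/-- `ζ +ₒ ω` inside `OT κ`. -/
noncomputable def zetom (hκ : ℵ₀ < κ) (ζ : OT κ) : OT κ :=
  elOf (ordOf ζ + Ordinal.omega0) (by
    rw [Cardinal.lt_ord, Ordinal.card_add, Ordinal.card_omega0]
    apply Cardinal.add_lt_of_lt (le_of_lt hκ)
    · rw [← Cardinal.lt_ord]; exact ordOf_lt_ord ζ
    · exact hκ)

theorem lt_zetom (hκ : ℵ₀ < κ) (ζ : OT κ) : ζ < zetom hκ ζ := by
  rw [← ordOf_lt_iff]
  unfold zetom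
  rw [ordOf_elOf]
  exact (lt_add_iff_pos_right _).2 Ordinal.omega0_pos

theorem lt_lamO_of_zetom_le (hκ : ℵ₀ < κ) {ζ x : OT κ} (h : zetom hκ ζ ≤ x) :
    ζ < lamO hκ x := by
  rw [← ordOf_lt_iff]
  unfold lamO
  rw [ordOf_elOf]
  have h1 : ordOf (zetom hκ ζ) ≤ ordOf x := ordOf_le_iff.2 h
  unfold zetom at h1
  rw [ordOf_elOf] at h1
  have h2 : ordOf ζ + Ordinal.omega0 ≤ limO (ordOf x) :=
    limit_le_limO (Ordinal.isSuccLimit_add _ Ordinal.isSuccLimit_omega0) h1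
  exact lt_of_lt_of_le ((lt_add_iff_pos_right _).2 Ordinal.omega0_pos) h2

theorem succO_lt_of_isLimO (hκ0 : ℵ₀ ≤ κ) (hκ : ℵ₀ < κ) {y ℓ : OT κ} (hℓ : IsLimO ℓ)
    (hy : y < ℓ) : succO hκ0 y < ℓ := by
  have hcard : ordOf y + 1 < κ.ord := by
    rw [Cardinal.lt_ord, Ordinal.card_add, Ordinal.card_one]
    apply Cardinal.add_lt_of_lt (le_of_lt hκ)
    · rw [← Cardinal.lt_ord]; exact ordOf_lt_ord y
    · exact lt_of_lt_of_le Cardinal.one_lt_aleph0 (le_of_lt hκ)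
  set z : OT κ := elOf (ordOf y + 1) hcard with hz
  have hyz : y < z := by
    rw [← ordOf_lt_iff, hz, ordOf_elOf]
    exact lt_add_one _
  have hzℓ : z < ℓ := by
    rw [← ordOf_lt_iff, hz, ordOf_elOf]
    have h1 : ordOf y < ordOf ℓ := ordOf_lt_iff.2 hy
    have := Order.IsSuccLimit.succ_lt hℓ h1
    rwa [Order.succ_eq_add_one] at this
  exact lt_of_le_of_lt (succO_le hκ0 hyz) hzℓ

noncomputable def botO (hκ : ℵ₀ < κ) : OT κ :=
  elOf 0 (by
    rw [Cardinal.lt_ord, Ordinal.card_zero]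
    exact lt_of_le_of_lt zero_le hκ)

theorem botO_lt_of_isLimO (hκ : ℵ₀ < κ) {ℓ : OT κ} (hℓ : IsLimO ℓ) : botO hκ < ℓ := by
  rw [← ordOf_lt_iff]
  unfold botO
  rw [ordOf_elOf]
  exact Order.IsSuccLimit.pos hℓ

end Lam

section Algebra

variable {G : Type u} [AddCommGroup G]

/-- Cardinality bound for spans over `ℤ`. -/
theorem mk_span_le (s : Set G) : #↥(Submodule.span ℤ s) ≤ max (#s) ℵ₀ := by
  classical
  have h1 : #↥(Submodule.span ℤ s) ≤ #(↥s →₀ ℤ) := by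
    have hr : (Submodule.span ℤ s : Set G) =
        Set.range ⇑(Finsupp.linearCombination ℤ ((↑) : s → G)) := by
      rw [← LinearMap.coe_range, Finsupp.range_linearCombination, Subtype.range_coe]
    calc #↥(Submodule.span ℤ s) = #↥(Set.range ⇑(Finsupp.linearCombination ℤ ((↑) : s → G)))
          := by rw [← hr]; rfl
      _ ≤ #(↥s →₀ ℤ) := Cardinal.mk_range_le
  rcases isEmpty_or_nonempty ↥s with he | hne
  · have : Subsingleton (↥s →₀ ℤ) := by infer_instance
    have h2 : #(↥s →₀ ℤ) ≤ 1 := Cardinal.le_one_iff_subsingleton.2 this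
    exact le_trans h1 (le_trans h2 (le_trans Cardinal.one_le_aleph0 (le_max_right _ _)))
  · have h2 : #(↥s →₀ ℤ) = max (#↥s) ℵ₀ := by
      rw [Cardinal.mk_finsupp_lift_of_infinite' ↥s ℤ]
      simp [Cardinal.mk_int]
    rw [h2] at h1
    exact h1

variable (e : OT κ ≃ G)

/-- The canonical filtration. -/
def Gsp (ξ : OT κ) : Submodule ℤ G := Submodule.span ℤ (e '' (Iio ξ))

theorem Gsp_mono {ξ η : OT κ} (h : ξ ≤ η) : Gsp e ξ ≤ Gsp e η :=
  Submodule.span_mono (Set.image_mono fun _ hy => lt_of_lt_of_le hy h)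

theorem mk_Gsp_lt (hκI : κ.IsInaccessible) (ξ : OT κ) : #↥(Gsp e ξ) < κ := by
  have h1 : #↥(e '' (Iio ξ)) ≤ #(Iio ξ) := Cardinal.mk_image_le
  have h2 : #↥(e '' (Iio ξ)) < κ := lt_of_le_of_lt h1 (mk_Iio_lt ξ)
  exact lt_of_le_of_lt (mk_span_le _) (max_lt h2 hκI.1)

theorem mem_Gsp_of_lt {g : G} {ξ : OT κ} (h : e.symm g < ξ) : g ∈ Gsp e ξ :=
  Submodule.subset_span ⟨e.symm g, h, e.apply_symm_apply g⟩

/-- Birth stage of an element. -/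
noncomputable def stageF (hκ0 : ℵ₀ ≤ κ) (g : G) : OT κ :=
  (wellFounded_lt).min {ξ : OT κ | g ∈ Gsp e ξ}
    ⟨succO hκ0 (e.symm g), mem_Gsp_of_lt e (lt_succO hκ0 _)⟩

theorem stageF_spec (hκ0 : ℵ₀ ≤ κ) (g : G) : g ∈ Gsp e (stageF e hκ0 g) :=
  (wellFounded_lt (α := OT κ)).min_mem {ξ : OT κ | g ∈ Gsp e ξ}
    ⟨succO hκ0 (e.symm g), mem_Gsp_of_lt e (lt_succO hκ0 _)⟩

theorem stageF_min (hκ0 : ℵ₀ ≤ κ) {g : G} {ξ : OT κ} (h : g ∈ Gsp e ξ) :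
    stageF e hκ0 g ≤ ξ := by
  by_contra hc
  push_neg at hc
  exact (wellFounded_lt (α := OT κ)).not_lt_min {ξ : OT κ | g ∈ Gsp e ξ}
    h hc

theorem mem_of_stageF_le (hκ0 : ℵ₀ ≤ κ) {g : G} {ξ : OT κ} (h : stageF e hκ0 g ≤ ξ) :
    g ∈ Gsp e ξ :=
  Gsp_mono e h (stageF_spec e hκ0 g)

/-- At limit stages, birth stages of members are strictly below. -/
theorem stageF_lt_of_limit (hκ0 : ℵ₀ ≤ κ) (hκ : ℵ₀ < κ) {g : G} {ξ : OT κ}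
    (hlim : IsLimO ξ) (hg : g ∈ Gsp e ξ) : stageF e hκ0 g < ξ := by
  classical
  obtain ⟨T, hTsub, hTsp⟩ := Submodule.mem_span_finite_of_mem_span hg
  rcases T.eq_empty_or_nonempty with rfl | hTne
  · simp only [Finset.coe_empty, Submodule.span_empty, Submodule.mem_bot] at hTsp
    have : g ∈ Gsp e (botO hκ) := by
      rw [hTsp]; exact Submodule.zero_mem _
    exact lt_of_le_of_lt (stageF_min e hκ0 this) (botO_lt_of_isLimO hκ hlim)
  · set S : Finset (OT κ) := T.image (fun t => e.symm t) with hS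
    have hSne : S.Nonempty := hTne.image _
    set m := S.max' hSne with hm
    have hmlt : m < ξ := by
      have hmem : m ∈ S := S.max'_mem hSne
      rw [hS] at hmem
      obtain ⟨t, htT, hte⟩ := Finset.mem_image.1 hmem
      obtain ⟨y, hy, hye⟩ := hTsub htT
      rw [← hte, ← hye, e.symm_apply_apply]
      exact hy
    have hz : succO hκ0 m < ξ := succO_lt_of_isLimO hκ0 hκ hlim hmlt
    have hTz : (T : Set G) ⊆ e '' (Iio (succO hκ0 m)) := by
      intro t ht
      refine ⟨e.symm t, ?_, e.apply_symm_apply t⟩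
      have : e.symm t ≤ m := S.le_max' _ (Finset.mem_image.2 ⟨t, ht, rfl⟩)
      exact lt_of_le_of_lt this (lt_succO hκ0 m)
    have : g ∈ Gsp e (succO hκ0 m) := Submodule.span_mono hTz hTsp
    exact lt_of_le_of_lt (stageF_min e hκ0 this) hz

/-- Existence of a basis-like subset for a free submodule. -/
theorem exists_basis_set (S : Submodule ℤ G) (hfree : Module.Free ℤ ↥S) :
    ∃ B : Set G, B ⊆ (S : Set G) ∧ Submodule.span ℤ B = S ∧
      LinearIndependent ℤ ((↑) : B → G) := by
  haveI := hfree
  set b := Module.Free.chooseBasis ℤ ↥S with hb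
  refine ⟨Subtype.val '' Set.range ⇑b, ?_, ?_, ?_⟩
  · rintro x ⟨y, _, rfl⟩
    exact y.2
  · have h1 : Subtype.val '' Set.range ⇑b = ⇑S.subtype '' Set.range ⇑b := rfl
    rw [h1, Submodule.span_image, b.span_eq, Submodule.map_subtype_top]
  · have h1 : LinearIndependent ℤ (⇑S.subtype ∘ ⇑b) :=
      b.linearIndependent.map' S.subtype (Submodule.ker_subtype S)
    exact h1.linearIndepOn_id' (by rw [Set.range_comp]; rfl)

/-- Transfer freeness from `AddSubgroup` form to `Submodule` form. -/
theorem free_of_addSubgroup_free (S : Submodule ℤ G)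
    (h : Module.Free ℤ ↥(S.toAddSubgroup)) : Module.Free ℤ ↥S := by
  haveI := h
  have eqv : ↥(S.toAddSubgroup) ≃+ ↥S :=
    { Equiv.subtypeEquivRight (fun x => Iff.rfl) with
      map_add' := fun a b => rfl }
  exact Module.Free.of_equiv eqv.toIntLinearEquiv

theorem mk_toAddSubgroup (S : Submodule ℤ G) : #↥(S.toAddSubgroup) = #↥S := rfl

end Algebra

section Main

theorem main_free (hκI : κ.IsInaccessible)
    (hpart : ∀ c : OT κ → OT κ → Bool, ∃ H : Set (OT κ), #H = κ ∧
      ∀ x ∈ H, ∀ y ∈ H, x < y → ∀ x' ∈ H, ∀ y' ∈ H, x' < y' → c x y = c x' y')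
    (G : Type u) [AddCommGroup G] (hG : #G = κ)
    (halmostfree : ∀ H : AddSubgroup G, #H < κ → Module.Free ℤ H) :
    Module.Free ℤ G := by
  classical
  have hreg : κ.IsRegular := hκI.isRegular
  have hκ0 : ℵ₀ ≤ κ := hreg.aleph0_le
  have hℵ : ℵ₀ < κ := hκI.1
  haveI hGinf : Infinite G := Cardinal.infinite_iff.mpr (by rw [hG]; exact hκ0)
  -- enumeration of G
  obtain ⟨e⟩ : Nonempty (OT κ ≃ G) := Cardinal.eq.1 (by rw [mk_OT, hG])
  -- local bases for the filtration
  have hfreeS : ∀ ξ : OT κ, Module.Free ℤ ↥(Gsp e ξ) := by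
    intro ξ
    refine free_of_addSubgroup_free _ (halmostfree _ ?_)
    rw [mk_toAddSubgroup]
    exact mk_Gsp_lt e hκI ξ
  have hbase : ∀ ξ : OT κ, ∃ B : Set G, B ⊆ (Gsp e ξ : Set G) ∧
      Submodule.span ℤ B = Gsp e ξ ∧ LinearIndependent ℤ ((↑) : B → G) :=
    fun ξ => exists_basis_set (Gsp e ξ) (hfreeS ξ)
  choose BB hBsub hBspan hBind using hbase
  -- local finite supports
  have hTex : ∀ (g : G) (ξ : OT κ), ∃ T : Finset G,
      (g ∈ Gsp e ξ → ((T : Set G) ⊆ BB ξ ∧ g ∈ Submodule.span ℤ (T : Set G))) ∧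
      (g ∉ Gsp e ξ → T = ∅) := by
    intro g ξ
    by_cases hg : g ∈ Gsp e ξ
    · have hg' : g ∈ Submodule.span ℤ (BB ξ) := by rw [hBspan]; exact hg
      obtain ⟨T, hT1, hT2⟩ := Submodule.mem_span_finite_of_mem_span hg'
      exact ⟨T, fun _ => ⟨hT1, hT2⟩, fun h => absurd hg h⟩
    · exact ⟨∅, fun h => absurd h hg, fun _ => rfl⟩
  choose Tch hTch1 hTch2 using hTex
  -- the sup-of-stages function
  set rho : G → OT κ → OT κ := fun g ξ =>
    if h : ((Tch g ξ).image (stageF e hκ0)).Nonempty then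
      ((Tch g ξ).image (stageF e hκ0)).max' h
    else botO hℵ with hrho
  have hrho_ge : ∀ (g : G) (ξ : OT κ), ∀ t ∈ Tch g ξ, stageF e hκ0 t ≤ rho g ξ := by
    intro g ξ t ht
    have hne : ((Tch g ξ).image (stageF e hκ0)).Nonempty :=
      ⟨_, Finset.mem_image_of_mem _ ht⟩
    have heq : rho g ξ = ((Tch g ξ).image (stageF e hκ0)).max' hne := by
      simp only [hrho]; rw [dif_pos hne]
    rw [heq]
    exact Finset.le_max' _ _ (Finset.mem_image_of_mem _ ht)
  have hrho_lt : ∀ (g : G) (ξ : OT κ), IsLimO ξ → rho g ξ < ξ := by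
    intro g ξ hlim
    by_cases hne : ((Tch g ξ).image (stageF e hκ0)).Nonempty
    · have heq : rho g ξ = ((Tch g ξ).image (stageF e hκ0)).max' hne := by
        simp only [hrho]; rw [dif_pos hne]
      rw [heq]
      have hmem := Finset.max'_mem _ hne
      obtain ⟨t, htT, hte⟩ := Finset.mem_image.1 hmem
      rw [← hte]
      by_cases hg : g ∈ Gsp e ξ
      · have htB : t ∈ BB ξ := (hTch1 g ξ hg).1 htT
        exact stageF_lt_of_limit e hκ0 hℵ hlim (hBsub ξ htB)
      · rw [hTch2 g ξ hg] at htT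
        exact absurd htT (Finset.notMem_empty t)
    · have heq : rho g ξ = botO hℵ := by simp only [hrho]; rw [dif_neg hne]
      rw [heq]
      exact botO_lt_of_isLimO hℵ hlim
  -- the function pool
  set P : Option G → (OT κ → OT κ) := fun o => match o with
    | none => lamO hℵ
    | some g => rho g
    with hP
  set comp : List (Option G) → (OT κ → OT κ) :=
    fun l => l.foldr (fun o f => (P o) ∘ f) id with hcomp
  -- generator sets
  set base : (OT κ ⊕ (G ⊕ (G × Finset G))) → Set (OT κ) := fun b => match b with
    | Sum.inl ζ => {α | ζ < α}
    | Sum.inr (Sum.inl v) => {ξ | v ∈ BB ξ}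
    | Sum.inr (Sum.inr gT) => {ξ | Tch gT.1 ξ = gT.2}
    with hbase'
  set gen : (List (Option G) × (OT κ ⊕ (G ⊕ (G × Finset G)))) → Set (OT κ) :=
    fun p => (comp p.1) ⁻¹' (base p.2) with hgen
  -- enumeration of generators
  have hGIcard : #(List (Option G) × (OT κ ⊕ (G ⊕ (G × Finset G)))) ≤ #(OT κ) := by
    rw [mk_OT]
    haveI : Infinite (Option G) := instInfiniteOption
    have h1 : #(List (Option G)) = κ := by
      rw [Cardinal.mk_list_eq_mk, Cardinal.mk_option, hG]
      exact Cardinal.add_one_eq hκ0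
    have h2 : #(OT κ ⊕ (G ⊕ (G × Finset G))) = κ := by
      rw [Cardinal.mk_sum, Cardinal.mk_sum, Cardinal.mk_prod]
      simp only [Cardinal.lift_id]
      rw [mk_OT, hG, Cardinal.mk_finset_of_infinite, hG]
      rw [Cardinal.mul_eq_self hκ0, Cardinal.add_eq_self hκ0, Cardinal.add_eq_self hκ0]
    rw [Cardinal.mk_prod]
    simp only [Cardinal.lift_id]
    rw [h1, h2, Cardinal.mul_eq_self hκ0]
  obtain ⟨j⟩ := (Cardinal.le_def _ _).1 hGIcard
  set A : OT κ → Set (OT κ) := fun α =>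
    if h : ∃ p, j p = α then gen h.choose else univ with hA
  have hAj : ∀ p, A (j p) = gen p := by
    intro p
    have hex : ∃ q, j q = j p := ⟨p, rfl⟩
    have h1 : A (j p) = gen hex.choose := by
      simp only [hA]; rw [dif_pos hex]
    rw [h1, j.injective hex.choose_spec]
  -- the branch and the filter
  obtain ⟨hbr, hXh⟩ := branch_lemma hκI hpart A
  set Xh : OT κ → Set (OT κ) := fun ξ => {α | ∀ i < ξ, (α ∈ A i ↔ hbr i = true)} with hXh'
  set U : Set (Set (OT κ)) := {B | ∃ ξ, Xh ξ ⊆ B} with hU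
  have hXmono : ∀ {ξ η : OT κ}, ξ ≤ η → Xh η ⊆ Xh ξ := by
    intro ξ η hle α hα i hi
    exact hα i (lt_of_lt_of_le hi hle)
  have hUup : ∀ {B C : Set (OT κ)}, B ∈ U → B ⊆ C → C ∈ U := by
    rintro B C ⟨ξ, hξ⟩ hBC
    exact ⟨ξ, fun α hα => hBC (hξ hα)⟩
  have hUne : ∀ B ∈ U, B.Nonempty := by
    rintro B ⟨ξ, hξ⟩
    have h1 : κ ≤ #(Xh ξ) := hXh ξ
    rcases Cardinal.mk_ne_zero_iff.1 (ne_of_gt (lt_of_lt_of_le hreg.pos h1)) with ⟨x⟩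
    exact ⟨x.1, hξ x.2⟩
  have hUinter : ∀ {J : Type u}, #J < κ → ∀ (f : J → Set (OT κ)),
      (∀ x, f x ∈ U) → (⋂ x, f x) ∈ U := by
    intro J hJ f hf
    choose ξf hξf using hf
    obtain ⟨ζ, hζ⟩ := bounded_of_small hreg (S := Set.range ξf)
      (lt_of_le_of_lt Cardinal.mk_range_le hJ)
    refine ⟨ζ, fun α hα => Set.mem_iInter.2 fun x => ?_⟩
    exact hξf x (hXmono (le_of_lt (hζ _ ⟨x, rfl⟩)) hα)
  have hUinter2 : ∀ {B C : Set (OT κ)}, B ∈ U → C ∈ U → B ∩ C ∈ U := by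
    rintro B C ⟨ξ1, h1⟩ ⟨ξ2, h2⟩
    refine ⟨max ξ1 ξ2, fun α hα => ?_⟩
    exact ⟨h1 (hXmono (le_max_left _ _) hα), h2 (hXmono (le_max_right _ _) hα)⟩
  have hdec : ∀ p, gen p ∈ U ∨ (gen p)ᶜ ∈ U := by
    intro p
    have hsub : Xh (succO hκ0 (j p)) ⊆ A (j p) ∨ Xh (succO hκ0 (j p)) ⊆ (A (j p))ᶜ := by
      cases hv : hbr (j p) with
      | false =>
        right
        intro α hα hmem
        have h1 := (hα (j p) (lt_succO hκ0 _)).1 hmem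
        rw [hv] at h1
        exact absurd h1 (by simp)
      | true =>
        left
        intro α hα
        exact (hα (j p) (lt_succO hκ0 _)).2 hv
    rw [hAj p] at hsub
    rcases hsub with h | h
    · exact Or.inl ⟨_, h⟩
    · exact Or.inr ⟨_, h⟩
  have htail : ∀ ζ : OT κ, {α : OT κ | ζ < α} ∈ U := by
    intro ζ
    have h0 : gen ([], Sum.inl ζ) = {α : OT κ | ζ < α} := rfl
    rcases hdec ([], Sum.inl ζ) with h | h
    · rwa [h0] at h
    · exfalso
      obtain ⟨ξ, hξ⟩ := h
      have hsub : Xh ξ ⊆ Iic ζ := by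
        intro α hα
        have := hξ hα
        rw [h0] at this
        simpa using this
      exact absurd (lt_of_le_of_lt (le_trans (hXh ξ) (mk_le_mk_of_subset hsub))
        (mk_Iic_lt hκ0 ζ)) (lt_irrefl κ)
  -- unboundedness and the minimal list
  set Ub : List (Option G) → Prop := fun l => ∀ ζ, {α | ζ < comp l α} ∈ U with hUb
  have hUbid : Ub [] := by
    intro ζ
    exact htail ζ
  set prec : List (Option G) → List (Option G) → Prop :=
    fun l l' => {α | comp l α < comp l' α} ∈ U with hprec'
  have hwf : WellFounded prec := by
    haveI : IsIrrefl (List (Option G)) prec := ⟨by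
      intro l hl
      obtain ⟨α, hα⟩ := hUne _ hl
      exact lt_irrefl (comp l α) hα⟩
    haveI : IsTrans (List (Option G)) prec := ⟨by
      intro a b c hab hbc
      refine hUup (hUinter2 hab hbc) (fun α hα => ?_)
      have h1 : comp a α < comp b α := hα.1
      have h2 : comp b α < comp c α := hα.2
      exact lt_trans h1 h2⟩
    haveI : IsStrictOrder (List (Option G)) prec := ⟨⟩
    rw [RelEmbedding.wellFounded_iff_isEmpty]
    constructor
    intro f
    have hd : ∀ n : ℕ, {α | comp (f (n+1)) α < comp (f n) α} ∈ U :=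
      fun n => f.map_rel_iff.2 (Nat.lt_succ_self n)
    have hint : (⋂ n : ULift.{u} ℕ, {α | comp (f (n.down+1)) α < comp (f n.down) α}) ∈ U :=
      hUinter (by simp only [Cardinal.mk_uLift, Cardinal.mk_nat, Cardinal.lift_aleph0]; exact hℵ)
        _ (fun n => hd n.down)
    obtain ⟨α, hα⟩ := hUne _ hint
    have hdesc : ∀ n : ℕ, comp (f (n+1)) α < comp (f n) α := by
      intro n
      exact Set.mem_iInter.1 hα ⟨n⟩
    exact (RelEmbedding.wellFounded_iff_isEmpty.mp
      (wellFounded_lt (α := OT κ))).false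
      (RelEmbedding.natGT (fun n => comp (f n) α) (fun n => hdesc n))
  obtain ⟨lstar, hlstarUb, hlstarmin⟩ := hwf.has_min {l | Ub l} ⟨[], hUbid⟩
  set fdd : OT κ → OT κ := fun α => lamO hℵ (comp lstar α) with hfdd
  set ldd : List (Option G) := none :: lstar with hldd
  have hcompldd : comp ldd = fdd := rfl
  have hUbdd : Ub ldd := by
    intro ζ
    apply hUup (hlstarUb (zetom hℵ ζ))
    intro α hα
    show ζ < comp ldd α
    have h1 : comp ldd α = lamO hℵ (comp lstar α) := rfl
    rw [h1]
    exact lt_lamO_of_zetom_le hℵ (le_of_lt hα)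
  have hfddlim : ∀ α, IsLimO (fdd α) := fun α => lamO_isLimO hℵ _
  -- boundedness of the regressive compositions
  have hbound : ∀ g : G, ∃ ζ, {α | rho g (fdd α) ≤ ζ} ∈ U := by
    intro g
    set lg : List (Option G) := (some g) :: ldd with hlg
    have hclg : ∀ α, comp lg α = rho g (fdd α) := fun α => rfl
    have hprecg : prec lg lstar := by
      show {α | comp lg α < comp lstar α} ∈ U
      apply hUup (hlstarUb (omO hℵ))
      intro α hα
      have hα' : omO hℵ < comp lstar α := hα
      show comp lg α < comp lstar α
      rw [hclg]
      have h2 : fdd α ≤ comp lstar α := lamO_le hℵ (le_of_lt hα')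
      exact lt_of_lt_of_le (hrho_lt g _ (hfddlim α)) h2
    have hnUb : ¬ Ub lg := fun hu => hlstarmin lg hu hprecg
    rw [hUb] at hnUb
    obtain ⟨ζ, hζ⟩ := not_forall.1 hnUb
    refine ⟨ζ, ?_⟩
    have h0 : gen (lg, Sum.inl ζ) = {α | ζ < comp lg α} := rfl
    rcases hdec (lg, Sum.inl ζ) with h | h
    · rw [h0] at h
      exact absurd h hζ
    · have heq : {α | rho g (fdd α) ≤ ζ} = (gen (lg, Sum.inl ζ))ᶜ := by
        rw [h0]
        ext α
        simp only [Set.mem_setOf_eq, Set.mem_compl_iff, not_lt]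
        rw [hclg]
      rw [heq]
      exact h
  -- the limit basis
  set V : Set G := {v | {α | v ∈ BB (fdd α)} ∈ U} with hV
  have hgenv : ∀ v : G, gen (ldd, Sum.inr (Sum.inl v)) = {α | v ∈ BB (fdd α)} := by
    intro v
    rfl
  -- independence
  have hVind : LinearIndependent ℤ ((↑) : V → G) := by
    apply linearIndepOn_of_finite (v := id)
    intro t hts htf
    haveI : Finite ↥t := htf.to_subtype
    have h1 : (⋂ x : ↥t, {α | (x : G) ∈ BB (fdd α)}) ∈ U :=
      hUinter (lt_of_lt_of_le (lt_aleph0_of_finite ↥t) hκ0) _ (fun x => hts x.2)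
    obtain ⟨α, hα⟩ := hUne _ h1
    have hsub : t ⊆ BB (fdd α) := by
      intro x hx
      exact Set.mem_iInter.1 hα ⟨x, hx⟩
    exact LinearIndepOn.mono (hBind (fdd α)) hsub
  -- spanning
  have hVspan : ∀ g : G, g ∈ Submodule.span ℤ V := by
    intro g
    obtain ⟨ζg, hζg⟩ := hbound g
    have hW1 : {α | stageF e hκ0 g < comp ldd α} ∈ U := hUbdd (stageF e hκ0 g)
    have hW1' : {α | stageF e hκ0 g < fdd α} ∈ U := hW1
    -- pieces
    set Car : Set G := (Gsp e ζg : Set G) with hCar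
    have hCarsmall : #↥Car < κ := mk_Gsp_lt e hκI ζg
    have hPIsmall : #{T : Finset G // (T : Set G) ⊆ Car} < κ := by
      have hinj : Function.Injective
          (fun T : {T : Finset G // (T : Set G) ⊆ Car} => T.val.subtype (· ∈ Car)) := by
        intro T1 T2 h12
        apply Subtype.ext
        apply Finset.ext
        intro x
        by_cases hx : x ∈ Car
        · have h3 := congrArg (fun s => (⟨x, hx⟩ : {y // y ∈ Car}) ∈ s) h12
          simpa [Finset.mem_subtype] using h3
        · constructor <;> intro h
          · exact absurd (T1.prop h) hx
          · exact absurd (T2.prop h) hx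
      have h1 : #{T : Finset G // (T : Set G) ⊆ Car} ≤ #(Finset ↥Car) :=
        Cardinal.mk_le_of_injective hinj
      have h2 : #(Finset ↥Car) ≤ #(Set ↥Car) :=
        Cardinal.mk_le_of_injective (f := fun T : Finset ↥Car => (T : Set ↥Car))
          (fun a b hab => Finset.coe_injective hab)
      rw [Cardinal.mk_set] at h2
      exact lt_of_le_of_lt (le_trans h1 h2) (hκI.isStrongPrelimit hCarsmall)
    -- pinning
    have hpin : ∃ T : Finset G, (T : Set G) ⊆ Car ∧ {α | Tch g (fdd α) = T} ∈ U := by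
      by_contra hc
      push_neg at hc
      have hcompl : ∀ T : {T : Finset G // (T : Set G) ⊆ Car},
          {α | Tch g (fdd α) = T.val}ᶜ ∈ U := by
        intro T
        have h0 : gen (ldd, Sum.inr (Sum.inr (g, T.val))) = {α | Tch g (fdd α) = T.val} :=
          rfl
        rcases hdec (ldd, Sum.inr (Sum.inr (g, T.val))) with h | h
        · rw [h0] at h
          exact absurd h (hc T.val T.prop)
        · rw [h0] at h
          exact h
      have hint : ((⋂ T : {T : Finset G // (T : Set G) ⊆ Car},
          {α | Tch g (fdd α) = T.val}ᶜ) ∩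
          ({α | stageF e hκ0 g < fdd α} ∩ {α | rho g (fdd α) ≤ ζg})) ∈ U :=
        hUinter2 (hUinter hPIsmall _ hcompl) (hUinter2 hW1' hζg)
      obtain ⟨α, hα⟩ := hUne _ hint
      obtain ⟨hα1, hα2, hα3⟩ := hα
      have hgmem : g ∈ Gsp e (fdd α) := mem_of_stageF_le e hκ0 (le_of_lt hα2)
      set T₀ : Finset G := Tch g (fdd α) with hT₀
      have hT₀sub : (T₀ : Set G) ⊆ Car := by
        intro x hx
        have h1 : stageF e hκ0 x ≤ rho g (fdd α) := hrho_ge g (fdd α) x hx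
        have h2 : x ∈ Gsp e ζg := mem_of_stageF_le e hκ0 (le_trans h1 hα3)
        exact h2
      have := Set.mem_iInter.1 hα1 ⟨T₀, hT₀sub⟩
      exact this rfl
    obtain ⟨T, hTsubCar, hTU⟩ := hpin
    have hint2 : ({α | Tch g (fdd α) = T} ∩ {α | stageF e hκ0 g < fdd α}) ∈ U :=
      hUinter2 hTU hW1'
    obtain ⟨α₁, hα₁1, hα₁2⟩ := hUne _ hint2
    have hgsp : g ∈ Submodule.span ℤ (T : Set G) := by
      have hg1 : g ∈ Gsp e (fdd α₁) := mem_of_stageF_le e hκ0 (le_of_lt hα₁2)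
      have h2 := (hTch1 g (fdd α₁) hg1).2
      rwa [hα₁1] at h2
    have hTV : (T : Set G) ⊆ V := by
      intro v hv
      rcases hdec (ldd, Sum.inr (Sum.inl v)) with h | h
      · rw [hgenv v] at h
        exact h
      · exfalso
        rw [hgenv v] at h
        have hint3 : ({α | v ∈ BB (fdd α)}ᶜ ∩
            ({α | Tch g (fdd α) = T} ∩ {α | stageF e hκ0 g < fdd α})) ∈ U :=
          hUinter2 h hint2
        obtain ⟨α₂, hβ1, hβ2, hβ3⟩ := hUne _ hint3
        have hg2 : g ∈ Gsp e (fdd α₂) := mem_of_stageF_le e hκ0 (le_of_lt hβ3)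
        have h4 : (Tch g (fdd α₂) : Set G) ⊆ BB (fdd α₂) := (hTch1 g (fdd α₂) hg2).1
        rw [hβ2] at h4
        exact hβ1 (h4 hv)
    exact Submodule.span_le.2
      (le_trans hTV Submodule.subset_span : (T : Set G) ⊆ (Submodule.span ℤ V : Set G))
      hgsp
  -- conclusion
  have htop : ⊤ ≤ Submodule.span ℤ (Set.range ((↑) : V → G)) := by
    rw [Subtype.range_coe]
    intro g _
    exact hVspan g
  exact Module.Free.of_basis (Module.Basis.mk hVind htop)

end Main

end WCproof

/-- If `κ` is weakly compact, then every almost-free abelian group of size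
`κ` is free: if `G` is an abelian group of cardinality `κ` all of whose subgroups of
cardinality `< κ` are free abelian groups, then `G` is a free abelian group. -/
theorem weakly_compact_abelian_compact (κ : Cardinal.{u}) (hκ : IsWeaklyCompact κ)
    (G : Type u) [AddCommGroup G] (hG : Cardinal.mk G = κ)
    (halmostfree : ∀ H : AddSubgroup G, Cardinal.mk ↥H < κ → Module.Free ℤ H) :
    Module.Free ℤ G := by
  obtain ⟨hκI, hpart⟩ := hκ
  exact WCproof.main_free hκI hpart G hG halmostfree
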